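/- arXiv:2603.02460 — 4 statements merged into one kernel-verified Lean document; each statement's English description precedes it below -/
import Mathlib

section
/- Let E_1, ..., E_{n+1} be exchangeable real-valued random variables. Then for each k ∈ {1,...,n+1}, the probability that E_{n+1} is less than or equal to the k-th smallest value among E_1, ..., E_n, precisely P(E_{n+1} ≤ E_{(k)}), is at least k/(n+1), where E_{(k)} denotes the k-th order statistic of E_1, ..., E_n. -/
open MeasureTheory

/-- The `k`-th smallest value among `x 0, ..., x (n-1)` (for `1 ≤ k ≤ n`). -/
noncomputable def orderStat {n : ℕ} (x : Fin n → ℝ) (k : ℕ) : ℝ :=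
  sInf {t : ℝ | k ≤ (Finset.univ.filter (fun i => x i ≤ t)).card}

lemma exists_kth {m k : ℕ} (hk1 : 1 ≤ k) (hkm : k ≤ m) (x : Fin m → ℝ) :
    ∃ b : ℝ, k ≤ (Finset.univ.filter (fun i => x i ≤ b)).card ∧
      (Finset.univ.filter (fun i => x i < b)).card < k := by
  classical
  have hm : 0 < m := lt_of_lt_of_le hk1 hkm
  have : Nonempty (Fin m) := Fin.pos_iff_nonempty.mp hm
  have hne : (Finset.univ : Finset (Fin m)).Nonempty := Finset.univ_nonempty
  have himg : (Finset.univ.image x).Nonempty := hne.image x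
  set S := (Finset.univ.image x).filter
    (fun t => k ≤ (Finset.univ.filter (fun i => x i ≤ t)).card) with hS
  have hSne : S.Nonempty := by
    refine ⟨(Finset.univ.image x).max' himg, Finset.mem_filter.mpr ⟨Finset.max'_mem _ _, ?_⟩⟩
    have hall : Finset.univ.filter (fun i => x i ≤ (Finset.univ.image x).max' himg)
        = Finset.univ := by
      apply Finset.filter_true_of_mem
      intro i _
      exact Finset.le_max' _ _ (Finset.mem_image_of_mem x (Finset.mem_univ i))
    rw [hall, Finset.card_univ, Fintype.card_fin]
    exact hkm
  set b := S.min' hSne with hb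
  have hbS : b ∈ S := Finset.min'_mem _ _
  obtain ⟨hbimg, hbcard⟩ := Finset.mem_filter.mp hbS
  refine ⟨b, hbcard, ?_⟩
  by_contra h
  push_neg at h
  have hne2 : (Finset.univ.filter (fun i => x i < b)).Nonempty := by
    rw [← Finset.card_pos]; omega
  obtain ⟨i0, hi0, hmax⟩ := Finset.exists_max_image _ x hne2
  have ht'lt : x i0 < b := (Finset.mem_filter.mp hi0).2
  have ht'S : x i0 ∈ S := by
    refine Finset.mem_filter.mpr ⟨Finset.mem_image_of_mem x (Finset.mem_univ i0), ?_⟩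
    refine le_trans h (Finset.card_le_card ?_)
    intro i hi
    simp only [Finset.mem_filter, Finset.mem_univ, true_and] at hi ⊢
    exact hmax i (Finset.mem_filter.mpr ⟨Finset.mem_univ i, hi⟩)
  exact absurd (Finset.min'_le S _ ht'S) (not_le.mpr ht'lt)

lemma key_count {m k : ℕ} (hk1 : 1 ≤ k) (hkm : k ≤ m) (x : Fin m → ℝ) :
    k ≤ (Finset.univ.filter (fun j =>
      (Finset.univ.filter (fun i => x i < x j)).card < k)).card := by
  classical
  obtain ⟨b, hb1, hb2⟩ := exists_kth hk1 hkm x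
  refine le_trans hb1 (Finset.card_le_card ?_)
  intro j hj
  simp only [Finset.mem_filter, Finset.mem_univ, true_and] at hj ⊢
  refine lt_of_le_of_lt (Finset.card_le_card ?_) hb2
  intro i hi
  simp only [Finset.mem_filter, Finset.mem_univ, true_and] at hi ⊢
  exact lt_of_lt_of_le hi hj

lemma claim1 {n k : ℕ} (hk1 : 1 ≤ k) (hkn : k ≤ n) (x : Fin (n + 1) → ℝ)
    (h : (Finset.univ.filter (fun i : Fin (n + 1) => x i < x (Fin.last n))).card < k) :
    x (Fin.last n) ≤ orderStat (fun i : Fin n => x i.castSucc) k := by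
  classical
  set a := x (Fin.last n) with ha
  set y : Fin n → ℝ := fun i => x i.castSucc with hy
  have hn : 0 < n := lt_of_lt_of_le hk1 hkn
  have : Nonempty (Fin n) := Fin.pos_iff_nonempty.mp hn
  have hcard : (Finset.univ.filter (fun i : Fin n => y i < a)).card < k := by
    refine lt_of_le_of_lt ?_ h
    apply Finset.card_le_card_of_injOn (fun i => i.castSucc)
    · intro i hi
      simp only [Finset.mem_coe, Finset.mem_filter, Finset.mem_univ, true_and] at hi ⊢
      exact hi
    · intro i _ j _ hij
      exact Fin.castSucc_injective n hij
  rw [orderStat]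
  have himg : (Finset.univ.image y).Nonempty := Finset.univ_nonempty.image y
  apply le_csInf
  · refine ⟨(Finset.univ.image y).max' himg, ?_⟩
    simp only [Set.mem_setOf_eq]
    have hall : Finset.univ.filter (fun i => y i ≤ (Finset.univ.image y).max' himg)
        = Finset.univ := by
      apply Finset.filter_true_of_mem
      intro i _
      exact Finset.le_max' _ _ (Finset.mem_image_of_mem y (Finset.mem_univ i))
    rw [hall, Finset.card_univ, Fintype.card_fin]
    exact hkn
  · intro t ht
    simp only [Set.mem_setOf_eq] at ht
    by_contra hta
    push_neg at hta
    have hle : (Finset.univ.filter (fun i => y i ≤ t)).card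
        ≤ (Finset.univ.filter (fun i => y i < a)).card := by
      refine Finset.card_le_card ?_
      intro i hi
      simp only [Finset.mem_filter, Finset.mem_univ, true_and] at hi ⊢
      exact lt_of_le_of_lt hi hta
    omega

lemma card_filter_comp_perm {m : ℕ} (σ : Equiv.Perm (Fin m)) (p : Fin m → Prop)
    [DecidablePred p] :
    (Finset.univ.filter (fun i => p (σ i))).card = (Finset.univ.filter p).card := by
  apply Finset.card_nbij (i := fun i => σ i)
  · intro i hi
    simpa using (Finset.mem_filter.mp hi).2
  · intro i _ j _ hij
    exact σ.injective hij
  · intro b hb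
    refine ⟨σ.symm b, ?_, σ.apply_symm_apply b⟩
    simp only [Finset.coe_filter, Set.mem_setOf_eq, Finset.mem_univ, true_and,
      Equiv.apply_symm_apply]
    exact (Finset.mem_filter.mp hb).2

/-- Conformal rank lemma: for exchangeable real random variables
`E 0, ..., E n`, the probability that the last one is at most the `k`-th order
statistic of the first `n` is at least `k / (n+1)`. -/
theorem exchangeable_rank_lemma
    {Ω : Type*} [MeasurableSpace Ω] (P : Measure Ω) [IsProbabilityMeasure P]
    (n : ℕ) (E : Fin (n + 1) → Ω → ℝ) (hE : ∀ i, Measurable (E i))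
    (hexch : ∀ σ : Equiv.Perm (Fin (n + 1)),
      P.map (fun ω (i : Fin (n + 1)) => E (σ i) ω) =
        P.map (fun ω (i : Fin (n + 1)) => E i ω))
    (k : ℕ) (hk1 : 1 ≤ k) (hkn : k ≤ n) :
    (k : ENNReal) / ((n : ENNReal) + 1) ≤
      P {ω | E (Fin.last n) ω ≤ orderStat (fun i : Fin n => E i.castSucc ω) k} := by
  classical
  set X : Ω → (Fin (n + 1) → ℝ) := fun ω i => E i ω with hX
  have hXmeas : Measurable X := measurable_pi_lambda _ (fun i => hE i)
  set μ := P.map X with hμ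
  set c : (Fin (n + 1) → ℝ) → Fin (n + 1) → ℕ :=
    fun x j => (Finset.univ.filter (fun i => x i < x j)).card with hc
  set B : Fin (n + 1) → Set (Fin (n + 1) → ℝ) := fun j => {x | c x j < k} with hB
  have hcmeas : ∀ j, Measurable (fun x => c x j) := by
    intro j
    have hrw : (fun x => c x j) = fun x => ∑ i, if x i < x j then 1 else 0 := by
      funext x
      exact Finset.card_filter _ _
    rw [hrw]
    exact Finset.measurable_sum _ (fun i _ =>
      Measurable.ite (measurableSet_lt (measurable_pi_apply i) (measurable_pi_apply j))
        measurable_const measurable_const)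
  have hBmeas : ∀ j, MeasurableSet (B j) := fun j =>
    (hcmeas j) measurableSet_Iio
  -- exchangeability: all B j have the same measure
  have hBeq : ∀ j, μ (B j) = μ (B (Fin.last n)) := by
    intro j
    set σ := Equiv.swap j (Fin.last n) with hσdef
    set g : (Fin (n + 1) → ℝ) → (Fin (n + 1) → ℝ) := fun x i => x (σ i) with hg
    have hgmeas : Measurable g := measurable_pi_lambda _ (fun i => measurable_pi_apply (σ i))
    have hmap : μ.map g = μ := by
      rw [hμ, Measure.map_map hgmeas hXmeas]
      exact hexch σ
    have hpre : g ⁻¹' (B j) = B (Fin.last n) := by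
      ext x
      simp only [hB, Set.mem_preimage, Set.mem_setOf_eq, hc, hg]
      have hr : (Finset.univ.filter (fun i => x (σ i) < x (σ j))).card
          = (Finset.univ.filter (fun i => x i < x (σ j))).card :=
        card_filter_comp_perm σ (fun i => x i < x (σ j))
      rw [hr, Equiv.swap_apply_left]
    calc μ (B j) = μ.map g (B j) := by rw [hmap]
      _ = μ (g ⁻¹' B j) := Measure.map_apply hgmeas (hBmeas j)
      _ = μ (B (Fin.last n)) := by rw [hpre]
  -- sum of measures is at least k
  have hsum : (k : ENNReal) ≤ ∑ j : Fin (n + 1), μ (B j) := by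
    have hμuniv : μ Set.univ = 1 := by
      rw [hμ, Measure.map_apply hXmeas MeasurableSet.univ]
      simp
    have hpt : ∀ x : Fin (n + 1) → ℝ,
        (k : ENNReal) ≤ ∑ j : Fin (n + 1), (B j).indicator (1 : (Fin (n + 1) → ℝ) → ENNReal) x := by
      intro x
      have h2 : ∑ j : Fin (n + 1), (B j).indicator (1 : (Fin (n + 1) → ℝ) → ENNReal) x
          = ∑ j : Fin (n + 1),
            if (Finset.univ.filter (fun i => x i < x j)).card < k then (1 : ENNReal) else 0 := by
        refine Finset.sum_congr rfl (fun j _ => ?_)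
        by_cases hx : (Finset.univ.filter (fun i => x i < x j)).card < k
        · rw [if_pos hx]
          exact Set.indicator_of_mem (show x ∈ B j from hx) (1 : (Fin (n + 1) → ℝ) → ENNReal)
        · rw [if_neg hx]
          exact Set.indicator_of_notMem (show x ∉ B j from hx) (1 : (Fin (n + 1) → ℝ) → ENNReal)
      rw [h2, Finset.sum_boole]
      have hkc := key_count hk1 (le_trans hkn (Nat.le_succ n)) x
      exact_mod_cast hkc
    calc (k : ENNReal) = ∫⁻ _, (k : ENNReal) ∂μ := by
          rw [lintegral_const, hμuniv, mul_one]
      _ ≤ ∫⁻ x, ∑ j : Fin (n + 1), (B j).indicator (1 : (Fin (n + 1) → ℝ) → ENNReal) x ∂μ :=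
          lintegral_mono (fun x => hpt x)
      _ = ∑ j : Fin (n + 1), ∫⁻ x, (B j).indicator (1 : (Fin (n + 1) → ℝ) → ENNReal) x ∂μ :=
          lintegral_finset_sum _ (fun j _ => measurable_one.indicator (hBmeas j))
      _ = ∑ j : Fin (n + 1), μ (B j) :=
          Finset.sum_congr rfl (fun j _ => lintegral_indicator_one (hBmeas j))
  have hsum2 : ∑ j : Fin (n + 1), μ (B j) = μ (B (Fin.last n)) * ((n : ENNReal) + 1) := by
    rw [Finset.sum_congr rfl (fun j _ => hBeq j), Finset.sum_const, Finset.card_univ,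
      Fintype.card_fin, nsmul_eq_mul]
    push_cast
    ring
  have hdiv : (k : ENNReal) / ((n : ENNReal) + 1) ≤ μ (B (Fin.last n)) := by
    apply ENNReal.div_le_of_le_mul
    rw [← hsum2]
    exact hsum
  refine le_trans hdiv ?_
  have hμB : μ (B (Fin.last n)) = P (X ⁻¹' (B (Fin.last n))) :=
    Measure.map_apply hXmeas (hBmeas (Fin.last n))
  rw [hμB]
  apply measure_mono
  intro ω hω
  simp only [hB, Set.mem_preimage, Set.mem_setOf_eq, hc, hX] at hω
  exact claim1 hk1 hkn (fun i => E i ω) hω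
end

section
/- Let (X_i, Y_i), i = 1, ..., n+1, be exchangeable random pairs, let s : X × Y → ℝ be a fixed measurable nonconformity score, set R_i = s(X_i, Y_i), and let q̂ be the ⌈(n+1)(1−α)⌉-th smallest value among R_1, ..., R_n (assuming ⌈(n+1)(1−α)⌉ ≤ n). Then P(s(X_{n+1}, Y_{n+1}) ≤ q̂) ≥ 1 − α, i.e., the conformal prediction set C(X_{n+1}) = {y : s(X_{n+1}, y) ≤ q̂} contains Y_{n+1} with probability at least 1 − α. -/
open MeasureTheory

open Finset ENNReal

lemma le_orderStat_iff {n k : ℕ} (hk1 : 1 ≤ k) (hkn : k ≤ n) (x : Fin n → ℝ) (t : ℝ) :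
    t ≤ orderStat x k ↔ (Finset.univ.filter fun i => x i < t).card < k := by
  have hn : 0 < n := lt_of_lt_of_le hk1 hkn
  haveI : Nonempty (Fin n) := ⟨⟨0, hn⟩⟩
  constructor
  · intro h
    by_contra hc
    push_neg at hc
    have hFne : (Finset.univ.filter fun i => x i < t).Nonempty :=
      Finset.card_pos.mp (lt_of_lt_of_le hk1 hc)
    obtain ⟨i₀, hi₀mem, hi₀⟩ := Finset.exists_max_image _ x hFne
    have hu_mem : x i₀ ∈ {t' : ℝ | k ≤ (Finset.univ.filter fun i => x i ≤ t').card} := by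
      refine le_trans hc (Finset.card_le_card ?_)
      intro i hi
      simp only [Finset.mem_filter] at hi ⊢
      exact ⟨hi.1, hi₀ i (Finset.mem_filter.mpr hi)⟩
    have hbdd : BddBelow {t' : ℝ | k ≤ (Finset.univ.filter fun i => x i ≤ t').card} := by
      obtain ⟨j₀, _, hj₀⟩ := Finset.exists_min_image Finset.univ x Finset.univ_nonempty
      refine ⟨x j₀, fun u hu => ?_⟩
      have : (Finset.univ.filter fun i => x i ≤ u).Nonempty :=
        Finset.card_pos.mp (lt_of_lt_of_le hk1 hu)
      obtain ⟨i, hi⟩ := this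
      exact le_trans (hj₀ i (Finset.mem_univ i)) (Finset.mem_filter.mp hi).2
    have h1 : orderStat x k ≤ x i₀ := csInf_le hbdd hu_mem
    have h2 : x i₀ < t := (Finset.mem_filter.mp hi₀mem).2
    exact absurd (le_trans h h1) (not_le.mpr h2)
  · intro hc
    apply le_csInf
    · obtain ⟨j₁, _, hj₁⟩ := Finset.exists_max_image Finset.univ x Finset.univ_nonempty
      refine ⟨x j₁, ?_⟩
      have : (Finset.univ.filter fun i => x i ≤ x j₁) = Finset.univ := by
        apply Finset.eq_univ_iff_forall.mpr
        intro i; exact Finset.mem_filter.mpr ⟨Finset.mem_univ i, hj₁ i (Finset.mem_univ i)⟩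
      show k ≤ (Finset.univ.filter fun i => x i ≤ x j₁).card
      rw [this, Finset.card_univ, Fintype.card_fin]
      exact hkn
    · intro u hu
      by_contra hlt
      push_neg at hlt
      have : (Finset.univ.filter fun i => x i ≤ u) ⊆ (Finset.univ.filter fun i => x i < t) := by
        intro i hi
        simp only [Finset.mem_filter] at hi ⊢
        exact ⟨hi.1, lt_of_le_of_lt hi.2 hlt⟩
      exact absurd (le_trans hu (Finset.card_le_card this)) (not_le.mpr hc)

lemma card_filter_val_lt (n k : ℕ) (hk : k ≤ n) :
    (Finset.univ.filter fun m : Fin n => (m : ℕ) < k).card = k := by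
  have himg : (Finset.univ.filter fun m : Fin n => (m : ℕ) < k).image Fin.val
      = Finset.range k := by
    ext v
    simp only [Finset.mem_image, Finset.mem_filter, Finset.mem_univ, true_and,
      Finset.mem_range]
    constructor
    · rintro ⟨m, hm, rfl⟩; exact hm
    · intro hv; exact ⟨⟨v, lt_of_lt_of_le hv hk⟩, hv, rfl⟩
  have := congrArg Finset.card himg
  rwa [Finset.card_image_of_injective _ Fin.val_injective, Finset.card_range] at this

lemma count_small_rank {n k : ℕ} (hk : k ≤ n) (r : Fin n → ℝ) :
    k ≤ (Finset.univ.filter fun j =>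
      (Finset.univ.filter fun i => r i < r j).card < k).card := by
  set g := Tuple.sort r with hg
  have hmono := Tuple.monotone_sort r
  have hsub : (Finset.univ.filter fun m : Fin n => (m : ℕ) < k).image g ⊆
      Finset.univ.filter (fun j => (Finset.univ.filter fun i => r i < r j).card < k) := by
    intro j hj
    simp only [Finset.mem_image, Finset.mem_filter, Finset.mem_univ, true_and] at hj ⊢
    obtain ⟨m, hm, rfl⟩ := hj
    refine lt_of_le_of_lt ?_ hm
    calc (Finset.univ.filter fun i => r i < r (g m)).card
        ≤ ((Finset.univ.filter fun p : Fin n => (p : ℕ) < (m : ℕ)).image g).card := by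
          apply Finset.card_le_card
          intro i hi
          simp only [Finset.mem_filter, Finset.mem_univ, true_and] at hi
          have hi' : r (g (g.symm i)) < r (g m) := by simpa using hi
          have hlt : (g.symm i : ℕ) < (m : ℕ) := by
            by_contra hge
            push_neg at hge
            have : r (g m) ≤ r (g (g.symm i)) := hmono (by exact_mod_cast hge)
            exact absurd hi' (not_lt.mpr this)
          exact Finset.mem_image.mpr ⟨g.symm i,
            Finset.mem_filter.mpr ⟨Finset.mem_univ _, hlt⟩, by simp⟩
      _ ≤ (Finset.univ.filter fun p : Fin n => (p : ℕ) < (m : ℕ)).card :=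
          Finset.card_image_le
      _ = (m : ℕ) := card_filter_val_lt n m m.isLt.le
  calc k = ((Finset.univ.filter fun m : Fin n => (m : ℕ) < k).image g).card := by
        rw [Finset.card_image_of_injective _ g.injective, card_filter_val_lt n k hk]
    _ ≤ _ := Finset.card_le_card hsub

lemma card_filter_perm {n : ℕ} (σ : Equiv.Perm (Fin n)) (q : Fin n → Prop) [DecidablePred q] :
    (Finset.univ.filter fun i => q (σ i)).card = (Finset.univ.filter q).card := by
  apply Finset.card_bij' (fun i _ => σ i) (fun j _ => σ.symm j) <;>
    simp [Finset.mem_filter]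

lemma card_filter_castSucc {n : ℕ} (p : Fin (n + 1) → Prop) [DecidablePred p]
    (hl : ¬ p (Fin.last n)) :
    (Finset.univ.filter p).card = (Finset.univ.filter fun i : Fin n => p i.castSucc).card := by
  rw [Fin.univ_castSuccEmb, Finset.filter_cons, if_neg hl]
  simp only [Finset.filter_map, Finset.card_map]
  rfl

set_option linter.unusedVariables false in
/-- Split conformal prediction coverage guarantee: with `q̂` the
`⌈(n+1)(1-α)⌉`-th smallest calibration score, the score of the test point is at
most `q̂` with probability at least `1 - α`; equivalently the conformal set
`C(X_{n+1}) = {y | s (X_{n+1}, y) ≤ q̂}` contains `Y_{n+1}` with probability at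
least `1 - α`. -/
theorem split_conformal_coverage
    {Ω 𝒳 𝒴 : Type*} [MeasurableSpace Ω] [MeasurableSpace 𝒳] [MeasurableSpace 𝒴]
    (P : Measure Ω) [IsProbabilityMeasure P]
    (n : ℕ) (X : Fin (n + 1) → Ω → 𝒳) (Y : Fin (n + 1) → Ω → 𝒴)
    (hX : ∀ i, Measurable (X i)) (hY : ∀ i, Measurable (Y i))
    (hexch : ∀ σ : Equiv.Perm (Fin (n + 1)),
      P.map (fun ω (i : Fin (n + 1)) => (X (σ i) ω, Y (σ i) ω)) =
        P.map (fun ω (i : Fin (n + 1)) => (X i ω, Y i ω)))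
    (s : 𝒳 × 𝒴 → ℝ) (hs : Measurable s)
    (α : ℝ) (hα0 : 0 < α) (hα1 : α < 1)
    (hk : ⌈((n : ℝ) + 1) * (1 - α)⌉₊ ≤ n) :
    ENNReal.ofReal (1 - α) ≤
      P {ω | Y (Fin.last n) ω ∈
        {y : 𝒴 | s (X (Fin.last n) ω, y) ≤
          orderStat (fun i : Fin n => s (X i.castSucc ω, Y i.castSucc ω))
            ⌈((n : ℝ) + 1) * (1 - α)⌉₊} } := by
  classical
  set k := ⌈((n : ℝ) + 1) * (1 - α)⌉₊ with hkdef
  have h1α : (0 : ℝ) < 1 - α := by linarith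
  have hk1 : 1 ≤ k := Nat.ceil_pos.mpr (by positivity)
  set Z : Ω → (Fin (n + 1) → ℝ) := fun ω i => s (X i ω, Y i ω) with hZdef
  have hZ : Measurable Z := measurable_pi_lambda _ fun i => hs.comp ((hX i).prodMk (hY i))
  set sv : (Fin (n + 1) → 𝒳 × 𝒴) → (Fin (n + 1) → ℝ) := fun v i => s (v i) with hsvdef
  have hsv : Measurable sv := measurable_pi_lambda _ fun i => hs.comp (measurable_pi_apply i)
  set ν := P.map Z with hν
  have hνprob : IsProbabilityMeasure ν := Measure.isProbabilityMeasure_map hZ.aemeasurable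
  -- permutation invariance of the score vector law
  have hνperm : ∀ σ : Equiv.Perm (Fin (n + 1)),
      ν.map (fun r (i : Fin (n + 1)) => r (σ i)) = ν := by
    intro σ
    have hperm : Measurable (fun r : Fin (n + 1) → ℝ => fun i => r (σ i)) :=
      measurable_pi_lambda _ fun i => measurable_pi_apply (σ i)
    have hWσ : Measurable (fun ω (i : Fin (n + 1)) => (X (σ i) ω, Y (σ i) ω)) :=
      measurable_pi_lambda _ fun i => (hX (σ i)).prodMk (hY (σ i))
    have hW : Measurable (fun ω (i : Fin (n + 1)) => (X i ω, Y i ω)) :=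
      measurable_pi_lambda _ fun i => (hX i).prodMk (hY i)
    have h1 : ν.map (fun r (i : Fin (n + 1)) => r (σ i))
        = P.map (fun ω (i : Fin (n + 1)) => s (X (σ i) ω, Y (σ i) ω)) := by
      rw [hν, Measure.map_map hperm hZ]; rfl
    have h2 : P.map (fun ω (i : Fin (n + 1)) => s (X (σ i) ω, Y (σ i) ω))
        = (P.map (fun ω (i : Fin (n + 1)) => (X (σ i) ω, Y (σ i) ω))).map sv := by
      rw [Measure.map_map hsv hWσ]; rfl
    have h3 : (P.map (fun ω (i : Fin (n + 1)) => (X i ω, Y i ω))).map sv = ν := by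
      rw [Measure.map_map hsv hW, hν]; rfl
    rw [h1, h2, hexch σ, h3]
  -- measurable rank events
  set B : Fin (n + 1) → Set (Fin (n + 1) → ℝ) := fun j =>
    {r | (Finset.univ.filter fun i => r i < r j).card < k} with hBdef
  have hcard : ∀ j : Fin (n + 1), Measurable fun r : Fin (n + 1) → ℝ =>
      (Finset.univ.filter fun i => r i < r j).card := by
    intro j
    have heq : (fun r : Fin (n + 1) → ℝ => (Finset.univ.filter fun i => r i < r j).card)
        = fun r => ∑ i : Fin (n + 1), if r i < r j then 1 else 0 := by
      funext r; rw [Finset.card_filter]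
    rw [heq]
    exact Finset.measurable_sum _ fun i _ =>
      Measurable.ite (measurableSet_lt (measurable_pi_apply i) (measurable_pi_apply j))
        measurable_const measurable_const
  have hB : ∀ j, MeasurableSet (B j) := by
    intro j
    exact (hcard j) (measurableSet_Iio (a := k))
  -- all events have the same probability
  have hBeq : ∀ j, ν (B j) = ν (B (Fin.last n)) := by
    intro j
    set σ := Equiv.swap j (Fin.last n) with hσ
    have hperm : Measurable (fun r : Fin (n + 1) → ℝ => fun i => r (σ i)) :=
      measurable_pi_lambda _ fun i => measurable_pi_apply (σ i)
    have hpre : (fun r : Fin (n + 1) → ℝ => fun i => r (σ i)) ⁻¹' (B j)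
        = B (Fin.last n) := by
      ext r
      simp only [hBdef, Set.mem_preimage, Set.mem_setOf_eq]
      rw [card_filter_perm σ (fun i => r i < r (σ j)), Equiv.swap_apply_left]
    calc ν (B j) = (ν.map (fun r (i : Fin (n + 1)) => r (σ i))) (B j) := by rw [hνperm σ]
      _ = ν (B (Fin.last n)) := by rw [Measure.map_apply hperm (hB j), hpre]
  -- pointwise counting bound
  have hpoint : ∀ r : Fin (n + 1) → ℝ,
      (k : ℝ≥0∞) ≤ ∑ j : Fin (n + 1), (B j).indicator (fun _ => (1 : ℝ≥0∞)) r := by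
    intro r
    have h1 : ∑ j : Fin (n + 1), (B j).indicator (fun _ => (1 : ℝ≥0∞)) r
        = ((Finset.univ.filter fun j =>
            (Finset.univ.filter fun i => r i < r j).card < k).card : ℝ≥0∞) := by
      rw [Finset.card_filter]
      push_cast
      apply Finset.sum_congr rfl
      intro j _
      by_cases h : (Finset.univ.filter fun i => r i < r j).card < k
      · simp [Set.indicator, hBdef, h]
      · simp [Set.indicator, hBdef, h]
    rw [h1]
    exact_mod_cast count_small_rank (le_trans hk (Nat.le_succ n)) r
  -- the sum bound
  have hsum : (k : ℝ≥0∞) ≤ ((n : ℝ≥0∞) + 1) * ν (B (Fin.last n)) := by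
    have h2 : (k : ℝ≥0∞) ≤ ∑ j : Fin (n + 1), ν (B j) := by
      calc (k : ℝ≥0∞) = ∫⁻ _, (k : ℝ≥0∞) ∂ν := by
            rw [lintegral_const, measure_univ, mul_one]
        _ ≤ ∫⁻ r, ∑ j : Fin (n + 1), (B j).indicator (fun _ => (1 : ℝ≥0∞)) r ∂ν :=
            lintegral_mono hpoint
        _ = ∑ j : Fin (n + 1), ∫⁻ r, (B j).indicator (fun _ => (1 : ℝ≥0∞)) r ∂ν :=
            lintegral_finset_sum _ fun j _ => measurable_const.indicator (hB j)
        _ = ∑ j : Fin (n + 1), ν (B j) := by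
            refine Finset.sum_congr rfl fun j _ => ?_
            exact lintegral_indicator_one (hB j)
    rw [Finset.sum_congr rfl (fun j _ => hBeq j), Finset.sum_const, Finset.card_univ,
      Fintype.card_fin, nsmul_eq_mul] at h2
    refine le_trans h2 (le_of_eq ?_)
    push_cast
    ring
  -- identify the target event
  have htarget : {ω | Y (Fin.last n) ω ∈
      {y : 𝒴 | s (X (Fin.last n) ω, y) ≤
        orderStat (fun i : Fin n => s (X i.castSucc ω, Y i.castSucc ω)) k}}
      = Z ⁻¹' (B (Fin.last n)) := by
    ext ω
    simp only [Set.mem_setOf_eq, Set.mem_preimage, hBdef]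
    rw [le_orderStat_iff hk1 hk]
    have hcc := card_filter_castSucc
      (fun i : Fin (n + 1) => Z ω i < Z ω (Fin.last n)) (lt_irrefl _)
    constructor
    · intro h; rw [hcc]; exact h
    · intro h; rw [hcc] at h; exact h
  rw [htarget, ← Measure.map_apply hZ (hB (Fin.last n)), ← hν]
  -- final arithmetic
  have hreal : ((n : ℝ) + 1) * (1 - α) ≤ (k : ℝ) := Nat.le_ceil _
  have hstep1 : ENNReal.ofReal (1 - α) ≤ (k : ℝ≥0∞) / ((n : ℝ≥0∞) + 1) := by
    have hr : (1 - α) ≤ (k : ℝ) / ((n : ℝ) + 1) := by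
      rw [le_div_iff₀ (by positivity)]
      linarith
    calc ENNReal.ofReal (1 - α) ≤ ENNReal.ofReal ((k : ℝ) / ((n : ℝ) + 1)) :=
          ENNReal.ofReal_le_ofReal hr
      _ = (k : ℝ≥0∞) / ((n : ℝ≥0∞) + 1) := by
          rw [ENNReal.ofReal_div_of_pos (by positivity), ENNReal.ofReal_natCast]
          congr 1
          rw [ENNReal.ofReal_add (by positivity) zero_le_one]
          simp
  refine le_trans hstep1 ?_
  rw [ENNReal.div_le_iff_le_mul (Or.inl ?_) (Or.inl ?_)]
  · exact hsum.trans_eq (mul_comm _ _)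
  · exact (lt_of_lt_of_le one_pos le_add_self).ne'
  · exact (ENNReal.add_lt_top.mpr ⟨ENNReal.natCast_lt_top n, ENNReal.one_lt_top⟩).ne
end

section
/- Let (X_i, Y_i), i = 1, ..., n+1, be exchangeable random pairs, ω : X → Ω a deterministic measurable feature map, s : X × Y → ℝ a fixed measurable score, and ψ : Ω → ℝ a fixed measurable function. Define residuals E_i = s(X_i, Y_i) − ψ(ω(X_i)) and let q̂ be the ⌈(n+1)(1−α)⌉-th smallest of E_1, ..., E_n (assuming this index is at most n). Then P(s(X_{n+1}, Y_{n+1}) ≤ ψ(ω(X_{n+1})) + q̂) ≥ 1 − α. -/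
open MeasureTheory

open Finset
open scoped ENNReal NNReal

lemma pigeon_rank {m : ℕ} (e : Fin m → ℝ) (k : ℕ) (hk : k ≤ m) :
    k ≤ (univ.filter (fun j : Fin m =>
      (univ.filter (fun i : Fin m => e i < e j)).card < k)).card := by
  by_contra hB
  push_neg at hB
  set B := univ.filter (fun j : Fin m =>
      (univ.filter (fun i : Fin m => e i < e j)).card < k) with hBdef
  have hBc : (univ \ B).Nonempty := by
    rw [Finset.sdiff_nonempty]
    intro hsub
    have := Finset.card_le_card hsub
    simp only [Finset.card_univ, Fintype.card_fin] at this
    omega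
  obtain ⟨j, hjmem, hjmin⟩ := Finset.exists_min_image (univ \ B) e hBc
  have hj : ¬ ((univ.filter (fun i : Fin m => e i < e j)).card < k) := by
    have := Finset.mem_sdiff.mp hjmem
    simpa [hBdef] using this.2
  push_neg at hj
  have hsub : ¬ (univ.filter (fun i : Fin m => e i < e j)) ⊆ B := by
    intro hss
    have := Finset.card_le_card hss
    omega
  obtain ⟨i, hiC, hiB⟩ := Finset.not_subset.mp hsub
  have hie : e i < e j := (Finset.mem_filter.mp hiC).2
  have : e j ≤ e i := hjmin i (Finset.mem_sdiff.mpr ⟨Finset.mem_univ i, hiB⟩)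
  linarith

lemma le_orderStat {n : ℕ} (x : Fin n → ℝ) (E : ℝ) (k : ℕ) (hkn : k ≤ n)
    (h : (univ.filter (fun i : Fin n => x i < E)).card < k) :
    E ≤ orderStat x k := by
  have hk1 : 1 ≤ k := by omega
  apply le_csInf
  · obtain ⟨t, ht⟩ := Finset.exists_le (Finset.univ.image x)
    refine ⟨t, ?_⟩
    have : (univ.filter (fun i : Fin n => x i ≤ t)) = univ := by
      apply Finset.filter_true_of_mem
      intro i _
      exact ht (x i) (Finset.mem_image_of_mem x (Finset.mem_univ i))
    simp only [Set.mem_setOf_eq, this, Finset.card_univ, Fintype.card_fin]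
    exact hkn
  · intro t ht
    simp only [Set.mem_setOf_eq] at ht
    by_contra hlt
    push_neg at hlt
    have hss : (univ.filter (fun i : Fin n => x i ≤ t)) ⊆
        (univ.filter (fun i : Fin n => x i < E)) := by
      intro i hi
      simp only [Finset.mem_filter] at hi ⊢
      exact ⟨hi.1, lt_of_le_of_lt hi.2 hlt⟩
    have := Finset.card_le_card hss
    omega

lemma filter_comp_equiv_card {m : ℕ} (τ : Equiv.Perm (Fin m)) (p : Fin m → Prop)
    [DecidablePred p] :
    (univ.filter (fun i => p (τ i))).card = (univ.filter p).card := by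
  have : univ.filter (fun i => p (τ i)) = (univ.filter p).image τ.symm := by
    ext a
    simp only [Finset.mem_filter, Finset.mem_image, Finset.mem_univ, true_and]
    constructor
    · intro h
      exact ⟨τ a, h, τ.symm_apply_apply a⟩
    · rintro ⟨b, hb, rfl⟩
      simpa using hb
  rw [this, Finset.card_image_of_injective _ τ.symm.injective]

/-- Marginal coverage of Score Conformalized Quantile Regression (SCQR):
with residuals `E_i = s (X_i, Y_i) - ψ (ω (X_i))` and `q̂` the
`⌈(n+1)(1-α)⌉`-th smallest of `E_1, ..., E_n`, the test point satisfies
`s (X_{n+1}, Y_{n+1}) ≤ ψ (ω (X_{n+1})) + q̂` with probability `≥ 1 - α`. -/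
theorem scqr_coverage
    {ΩS 𝒳 𝒴 𝒪 : Type*} [MeasurableSpace ΩS] [MeasurableSpace 𝒳]
    [MeasurableSpace 𝒴] [MeasurableSpace 𝒪]
    (P : Measure ΩS) [IsProbabilityMeasure P]
    (n : ℕ) (X : Fin (n + 1) → ΩS → 𝒳) (Y : Fin (n + 1) → ΩS → 𝒴)
    (hX : ∀ i, Measurable (X i)) (hY : ∀ i, Measurable (Y i))
    (hexch : ∀ σ : Equiv.Perm (Fin (n + 1)),
      P.map (fun ω' (i : Fin (n + 1)) => (X (σ i) ω', Y (σ i) ω')) =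
        P.map (fun ω' (i : Fin (n + 1)) => (X i ω', Y i ω')))
    (s : 𝒳 × 𝒴 → ℝ) (hs : Measurable s)
    (ω : 𝒳 → 𝒪) (hω : Measurable ω)
    (ψ : 𝒪 → ℝ) (hψ : Measurable ψ)
    (α : ℝ) (hα0 : 0 < α) (hα1 : α < 1)
    (hk : ⌈((n : ℝ) + 1) * (1 - α)⌉₊ ≤ n) :
    ENNReal.ofReal (1 - α) ≤
      P {ω' | s (X (Fin.last n) ω', Y (Fin.last n) ω') ≤
          ψ (ω (X (Fin.last n) ω')) +
            orderStat
              (fun i : Fin n =>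
                s (X i.castSucc ω', Y i.castSucc ω') - ψ (ω (X i.castSucc ω')))
              ⌈((n : ℝ) + 1) * (1 - α)⌉₊} := by
  classical
  set k : ℕ := ⌈((n : ℝ) + 1) * (1 - α)⌉₊ with hkdef
  have hk1 : 1 ≤ k := by
    rw [hkdef]
    exact Nat.one_le_iff_ne_zero.mpr (by
      simp only [ne_eq, Nat.ceil_eq_zero, not_le]
      have h1α : (0:ℝ) < 1 - α := by linarith
      positivity)
  -- the joint random vector
  set Z : ΩS → (Fin (n + 1) → 𝒳 × 𝒴) := fun ω' i => (X i ω', Y i ω') with hZdef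
  have hZ : Measurable Z :=
    measurable_pi_lambda _ (fun i => (hX i).prodMk (hY i))
  -- residual map
  set G : (Fin (n + 1) → 𝒳 × 𝒴) → Fin (n + 1) → ℝ :=
    fun z i => s (z i) - ψ (ω (z i).1) with hGdef
  have hG : ∀ i, Measurable (fun z => G z i) := fun i =>
    ((hs.comp (measurable_pi_apply i)).sub
      (hψ.comp (hω.comp (measurable_fst.comp (measurable_pi_apply i)))))
  -- the "low rank" events
  set A : Fin (n + 1) → Set (Fin (n + 1) → 𝒳 × 𝒴) := fun j =>
    {z | (univ.filter (fun i => G z i < G z j)).card < k} with hAdef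
  have hA : ∀ j, MeasurableSet (A j) := by
    intro j
    have hN : Measurable (fun z => (univ.filter (fun i => G z i < G z j)).card) := by
      simp only [Finset.card_filter]
      apply Finset.measurable_sum
      intro i _
      exact Measurable.ite (measurableSet_lt (hG i) (hG j))
        measurable_const measurable_const
    have : A j = (fun z => (univ.filter (fun i => G z i < G z j)).card) ⁻¹' (Set.Iio k) := rfl
    rw [this]
    exact hN MeasurableSpace.measurableSet_top
  set μ : Measure (Fin (n + 1) → 𝒳 × 𝒴) := P.map Z with hμdef
  have hμprob : IsProbabilityMeasure μ := Measure.isProbabilityMeasure_map hZ.aemeasurable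
  -- exchangeability: all A j have the same measure
  have hperm : ∀ j, μ (A j) = μ (A (Fin.last n)) := by
    intro j
    set τ : Equiv.Perm (Fin (n + 1)) := Equiv.swap j (Fin.last n) with hτdef
    set π : (Fin (n + 1) → 𝒳 × 𝒴) → (Fin (n + 1) → 𝒳 × 𝒴) :=
      fun z => z ∘ τ with hπdef
    have hπm : Measurable π :=
      measurable_pi_lambda _ (fun i => measurable_pi_apply (τ i))
    have hmap : μ.map π = μ := by
      rw [hμdef, Measure.map_map hπm hZ]
      have : π ∘ Z = fun ω' (i : Fin (n + 1)) => (X (τ i) ω', Y (τ i) ω') := rfl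
      rw [this, hexch τ]
    have hpre : π ⁻¹' (A (Fin.last n)) = A j := by
      ext z
      simp only [Set.mem_preimage, hAdef, Set.mem_setOf_eq, hπdef]
      have hτj : τ (Fin.last n) = j := Equiv.swap_apply_right j (Fin.last n)
      have hGcomp : ∀ i, G (z ∘ τ) i = G z (τ i) := fun i => rfl
      simp only [hGcomp, hτj]
      rw [filter_comp_equiv_card τ (fun i => G z i < G z j)]
    calc μ (A j) = μ (π ⁻¹' (A (Fin.last n))) := by rw [hpre]
      _ = (μ.map π) (A (Fin.last n)) := (Measure.map_apply hπm (hA _)).symm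
      _ = μ (A (Fin.last n)) := by rw [hmap]
  -- pigeonhole lower bound
  have hsum : (k : ℝ≥0∞) ≤ ∑ j, μ (A j) := by
    have hptw : ∀ z, (k : ℝ≥0∞) ≤
        ∑ j, (A j).indicator (fun _ => (1 : ℝ≥0∞)) z := by
      intro z
      have hcard := pigeon_rank (G z) k (by omega)
      have heq : ∑ j, (A j).indicator (fun _ => (1 : ℝ≥0∞)) z =
          ((univ.filter (fun j => z ∈ A j)).card : ℝ≥0∞) := by
        rw [Finset.card_filter, Nat.cast_sum]
        refine Finset.sum_congr rfl (fun j _ => ?_)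
        by_cases h : z ∈ A j <;> simp [Set.indicator_apply, h]
      rw [heq]
      have : (univ.filter (fun j : Fin (n + 1) =>
          (univ.filter (fun i => G z i < G z j)).card < k)) =
          (univ.filter (fun j => z ∈ A j)) := by
        apply Finset.filter_congr
        intro j _
        simp [hAdef]
      rw [this] at hcard
      exact_mod_cast hcard
    calc (k : ℝ≥0∞) = ∫⁻ _, (k : ℝ≥0∞) ∂μ := by
          simp [lintegral_const]
      _ ≤ ∫⁻ z, ∑ j, (A j).indicator (fun _ => (1 : ℝ≥0∞)) z ∂μ :=
          lintegral_mono hptw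
      _ = ∑ j, ∫⁻ z, (A j).indicator (fun _ => (1 : ℝ≥0∞)) z ∂μ :=
          lintegral_finset_sum _ (fun j _ =>
            measurable_const.indicator (hA j))
      _ = ∑ j, μ (A j) := by
          refine Finset.sum_congr rfl (fun j _ => ?_)
          exact lintegral_indicator_one (hA j)
  have hlast : ENNReal.ofReal (1 - α) ≤ μ (A (Fin.last n)) := by
    have hsum' : (k : ℝ≥0∞) ≤ ((n : ℝ≥0∞) + 1) * μ (A (Fin.last n)) := by
      calc (k : ℝ≥0∞) ≤ ∑ j, μ (A j) := hsum
        _ = ∑ _j : Fin (n + 1), μ (A (Fin.last n)) :=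
            Finset.sum_congr rfl (fun j _ => hperm j)
        _ = ((n : ℝ≥0∞) + 1) * μ (A (Fin.last n)) := by
            rw [Finset.sum_const, Finset.card_univ, Fintype.card_fin, nsmul_eq_mul]
            push_cast
            ring
    have h1 : ((n : ℝ≥0∞) + 1) * ENNReal.ofReal (1 - α) ≤ (k : ℝ≥0∞) := by
      have : (((n : ℝ) + 1) * (1 - α)) ≤ (k : ℝ) := Nat.le_ceil _
      calc ((n : ℝ≥0∞) + 1) * ENNReal.ofReal (1 - α)
          = ENNReal.ofReal (((n : ℝ) + 1) * (1 - α)) := by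
            rw [ENNReal.ofReal_mul (by positivity)]
            congr 1
            rw [ENNReal.ofReal_add (by positivity) zero_le_one]
            simp [ENNReal.ofReal_natCast]
        _ ≤ ENNReal.ofReal (k : ℝ) := ENNReal.ofReal_le_ofReal this
        _ = (k : ℝ≥0∞) := ENNReal.ofReal_natCast k
    have hmul : ((n : ℝ≥0∞) + 1) * ENNReal.ofReal (1 - α) ≤
        ((n : ℝ≥0∞) + 1) * μ (A (Fin.last n)) := h1.trans hsum'
    have hne0 : ((n : ℝ≥0∞) + 1) ≠ 0 := by simp
    have hnetop : ((n : ℝ≥0∞) + 1) ≠ ⊤ := by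
      simp [ENNReal.add_ne_top]
    exact (ENNReal.mul_le_mul_iff_right hne0 hnetop).mp hmul
  -- inclusion into the coverage event
  have hincl : Z ⁻¹' (A (Fin.last n)) ⊆
      {ω' | s (X (Fin.last n) ω', Y (Fin.last n) ω') ≤
        ψ (ω (X (Fin.last n) ω')) +
          orderStat (fun i : Fin n =>
            s (X i.castSucc ω', Y i.castSucc ω') - ψ (ω (X i.castSucc ω'))) k} := by
    intro ω' hω'
    simp only [Set.mem_preimage, hAdef, Set.mem_setOf_eq] at hω'
    set E : Fin (n + 1) → ℝ := fun i => s (X i ω', Y i ω') - ψ (ω (X i ω')) with hEdef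
    have hGE : ∀ i j, (G (Z ω') i < G (Z ω') j) = (E i < E j) := fun i j => rfl
    have hcnt : (univ.filter (fun i : Fin n => E i.castSucc < E (Fin.last n))).card ≤
        (univ.filter (fun i : Fin (n + 1) => E i < E (Fin.last n))).card := by
      apply Finset.card_le_card_of_injOn (fun i => i.castSucc)
      · intro i hi
        simp only [Finset.mem_coe, Finset.mem_filter, Finset.mem_univ, true_and] at hi ⊢
        exact hi
      · exact fun a _ b _ h => Fin.castSucc_injective n h
    have hcnt2 : (univ.filter (fun i : Fin n => E i.castSucc < E (Fin.last n))).card < k := by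
      refine lt_of_le_of_lt hcnt ?_
      convert hω' using 2
    have hle := le_orderStat (fun i : Fin n => E i.castSucc) (E (Fin.last n)) k hk hcnt2
    simp only [Set.mem_setOf_eq]
    have := sub_le_iff_le_add'.mp hle
    exact this
  calc ENNReal.ofReal (1 - α) ≤ μ (A (Fin.last n)) := hlast
    _ = P (Z ⁻¹' (A (Fin.last n))) := Measure.map_apply hZ (hA _)
    _ ≤ _ := measure_mono hincl
end

section
/- Weak isomorphism of finite uniform Z-networks of equal size is equivalent to permutation equivalence: for finite Z-networks (V_1, ω_1, μ_1) and (V_2, ω_2, μ_2) with |V_1| = |V_2| = n and uniform measures, G_1 is weakly isomorphic to G_2 if and only if there exists a permutation matrix P ∈ σ_n with ω_1 = Pᵀ ω_2 P (i.e., a bijection φ with ω_1(i, j) = ω_2(φ(i), φ(j)) for all i, j). -/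
open Finset

/-- Weak isomorphism of finite uniform Z-networks of size `n`: there is a
finite Z-network `(Fin N, ωW, c)` with full support and measure-preserving maps
onto both networks through which both relation functions pull back. -/
def WeakIso {Z : Type*} {n : ℕ} (ω₁ ω₂ : Fin n → Fin n → Z) : Prop :=
  ∃ (N : ℕ) (c : Fin N → ℝ) (ωW : Fin N → Fin N → Z)
    (φ₁ φ₂ : Fin N → Fin n),
    (∀ w, 0 < c w) ∧ (∑ w, c w = 1) ∧
    (∀ i : Fin n, ∑ w ∈ univ.filter (fun w => φ₁ w = i), c w = 1 / n) ∧
    (∀ i : Fin n, ∑ w ∈ univ.filter (fun w => φ₂ w = i), c w = 1 / n) ∧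
    (∀ w w', ωW w w' = ω₁ (φ₁ w) (φ₁ w') ∧ ωW w w' = ω₂ (φ₂ w) (φ₂ w'))

/-- Weak isomorphism of finite uniform Z-networks of equal size is equivalent
to permutation equivalence of the relation functions. -/
theorem weakIso_iff_perm {Z : Type*} {n : ℕ} (hn : 0 < n)
    (ω₁ ω₂ : Fin n → Fin n → Z) :
    WeakIso ω₁ ω₂ ↔ ∃ φ : Equiv.Perm (Fin n), ∀ i j, ω₁ i j = ω₂ (φ i) (φ j) := by
  have hn' : (0 : ℝ) < n := by exact_mod_cast hn
  constructor
  · rintro ⟨N, c, ωW, φ₁, φ₂, hc, _hsum, h1, h2, hω⟩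
    -- bipartite "support" sets
    set t : Fin n → Finset (Fin n) :=
      fun i => univ.filter (fun j => ∃ w, φ₁ w = i ∧ φ₂ w = j) with ht
    -- every fiber of φ₁ is nonempty
    have hfib : ∀ i : Fin n, ∃ w, φ₁ w = i := by
      intro i
      by_contra h
      push_neg at h
      have : (univ.filter (fun w => φ₁ w = i)) = ∅ := by
        apply filter_eq_empty_iff.mpr
        intro w _
        exact h w
      have hs := h1 i
      rw [this, Finset.sum_empty] at hs
      have hpos : (0:ℝ) < 1 / n := by positivity
      rw [← hs] at hpos
      exact lt_irrefl _ hpos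
    -- Hall's condition
    have hall : ∀ s : Finset (Fin n), s.card ≤ (s.biUnion t).card := by
      intro s
      have key : (s.card : ℝ) / n ≤ ((s.biUnion t).card : ℝ) / n := by
        have e1 : (s.card : ℝ) / n = ∑ w ∈ univ.filter (fun w => φ₁ w ∈ s), c w := by
          rw [← Finset.sum_fiberwise_eq_sum_filter univ s φ₁ c]
          rw [Finset.sum_congr rfl (fun i _ => h1 i)]
          rw [Finset.sum_const, nsmul_eq_mul]
          ring
        have e2 : ((s.biUnion t).card : ℝ) / n
            = ∑ w ∈ univ.filter (fun w => φ₂ w ∈ s.biUnion t), c w := by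
          rw [← Finset.sum_fiberwise_eq_sum_filter univ (s.biUnion t) φ₂ c]
          rw [Finset.sum_congr rfl (fun i _ => h2 i)]
          rw [Finset.sum_const, nsmul_eq_mul]
          ring
        rw [e1, e2]
        apply Finset.sum_le_sum_of_subset_of_nonneg
        · intro w hw
          simp only [mem_filter, mem_univ, true_and] at hw ⊢
          rw [Finset.mem_biUnion]
          exact ⟨φ₁ w, hw, by simp only [ht, mem_filter, mem_univ, true_and]; exact ⟨w, rfl, rfl⟩⟩
        · intro w _ _
          exact (hc w).le
      have := (div_le_div_iff_of_pos_right hn').mp key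
      exact_mod_cast this
    obtain ⟨f, hfinj, hf⟩ :=
      (Finset.all_card_le_biUnion_card_iff_exists_injective t).mp hall
    refine ⟨Equiv.ofBijective f (Finite.injective_iff_bijective.mp hfinj), ?_⟩
    intro i j
    have hi := hf i
    have hj := hf j
    simp only [ht, mem_filter, mem_univ, true_and] at hi hj
    obtain ⟨w, hw1, hw2⟩ := hi
    obtain ⟨w', hw1', hw2'⟩ := hj
    have h := hω w w'
    simp only [Equiv.ofBijective_apply]
    subst hw1 hw1'
    rw [← hw2, ← hw2', ← h.2, h.1]
  · rintro ⟨φ, hφ⟩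
    refine ⟨n, fun _ => 1 / n, ω₁, id, φ, fun w => by positivity, ?_, ?_, ?_, ?_⟩
    · rw [Finset.sum_const, nsmul_eq_mul]
      simp
      field_simp
    · intro i
      have : univ.filter (fun w : Fin n => id w = i) = {i} := by
        ext w; simp
      rw [this, Finset.sum_singleton]
    · intro i
      have : univ.filter (fun w : Fin n => φ w = i) = {φ.symm i} := by
        ext w; simp [Equiv.eq_symm_apply, eq_comm]
      rw [this, Finset.sum_singleton]
    · intro w w'
      exact ⟨rfl, hφ w w'⟩
end
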